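/- arXiv:2404.17924 — 3 statements merged into one kernel-verified Lean document; each statement's English description precedes it below -/
import Mathlib

section
/- D ⊆ 𝒢 is a coherent set of desirable gambles if and only if 0 ∉ D and D = desext(E) := posi(E ∪ G₊) for some E ⊆ 𝒢. -/
open scoped BigOperators

universe u v

def GambleSpace (Ω : Type v) : Submodule ℝ (Ω → ℝ) where
  carrier := {f | ∃ M, ∀ ω, |f ω| ≤ M}
  add_mem' := by
    rintro f g ⟨M, hM⟩ ⟨N, hN⟩
    exact ⟨M + N, fun ω => (abs_add_le _ _).trans (add_le_add (hM ω) (hN ω))⟩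
  zero_mem' := ⟨0, fun ω => by simp⟩
  smul_mem' := by
    rintro c f ⟨M, hM⟩
    exact ⟨|c| * M, fun ω => by
      simpa [abs_mul] using mul_le_mul_of_nonneg_left (hM ω) (abs_nonneg c)⟩

/-- The type of gambles: bounded functions `Ω → ℝ`. -/
abbrev Gamble (Ω : Type v) := GambleSpace Ω

/-- Pointwise order on gambles: `gle f g` means `f ≤ g` pointwise. -/
def gle {Ω : Type v} (f g : Gamble Ω) : Prop := ∀ ω, (f : Ω → ℝ) ω ≤ (g : Ω → ℝ) ω

/-- Gambles weakly dominating `0`. -/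
def Gpos (Ω : Type v) : Set (Gamble Ω) := {g | gle 0 g ∧ g ≠ 0}

/-- Positive linear hull: finite positive combinations of members of `B`. -/
def posi {Ω : Type v} (B : Set (Gamble Ω)) : Set (Gamble Ω) :=
  {f | ∃ n : ℕ, 0 < n ∧ ∃ (l : Fin n → ℝ) (g : Fin n → Gamble Ω),
    (∀ i, 0 < l i) ∧ (∀ i, g i ∈ B) ∧ f = ∑ i, l i • g i}

/-- Natural extension of a set of gambles. -/
def desext {Ω : Type v} (E : Set (Gamble Ω)) : Set (Gamble Ω) := posi (E ∪ Gpos Ω)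

/-- Coherence for a set of desirable gambles. -/
def CoherentD {Ω : Type v} (D : Set (Gamble Ω)) : Prop :=
  (0 : Gamble Ω) ∉ D ∧ Gpos Ω ⊆ D ∧
  (∀ g ∈ D, ∀ l : ℝ, 0 < l → l • g ∈ D) ∧
  (∀ f ∈ D, ∀ g ∈ D, f + g ∈ D)

/-- Coherence for a set of desirable gamble sets. -/
def CoherentK {Ω : Type v} (K : Set (Set (Gamble Ω))) : Prop :=
  (∅ : Set (Gamble Ω)) ∉ K ∧
  (∀ A ∈ K, A \ {0} ∈ K) ∧
  (∀ g ∈ Gpos Ω, ({g} : Set (Gamble Ω)) ∈ K) ∧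
  (∀ A ∈ K, ∀ B : Set (Gamble Ω), A ⊆ B → B ∈ K) ∧
  (∀ A ∈ K, ∀ F : Gamble Ω → Gamble Ω, (∀ g ∈ A, gle g (F g)) → F '' A ∈ K) ∧
  (∀ n : ℕ, 0 < n → ∀ A : Fin n → Set (Gamble Ω), (∀ i, A i ∈ K) →
    ∀ F : (Fin n → Gamble Ω) → Gamble Ω,
    (∀ g : Fin n → Gamble Ω, (∀ i, g i ∈ A i) → F g ∈ posi (Set.range g)) →
    {b | ∃ g : Fin n → Gamble Ω, (∀ i, g i ∈ A i) ∧ b = F g} ∈ K)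

/-- The infinite addition axiom. -/
def KAddInf {Ω : Type v} (K : Set (Set (Gamble Ω))) : Prop :=
  ∀ (I : Type v) (A : I → Set (Gamble Ω)), (∀ i, A i ∈ K) →
    ∀ F : (I → Gamble Ω) → Gamble Ω,
    (∀ g : I → Gamble Ω, (∀ i, g i ∈ A i) → F g ∈ posi (Set.range g)) →
    {b | ∃ g : I → Gamble Ω, (∀ i, g i ∈ A i) ∧ b = F g} ∈ K

/-- Natural extension of a set of gamble sets (nonempty case). -/
def ExtK {Ω : Type v} (𝒜 : Set (Set (Gamble Ω))) : Set (Set (Gamble Ω)) :=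
  {B | ∃ n : ℕ, 0 < n ∧ ∃ A : Fin n → Set (Gamble Ω), (∀ i, A i ∈ 𝒜) ∧
    ∀ g : Fin n → Gamble Ω, (∀ i, g i ∈ A i) →
      (0 : Gamble Ω) ∉ desext (Set.range g) → ∃ f ∈ B, f ∈ desext (Set.range g)}

lemma mem_posi_self {Ω : Type v} {B : Set (Gamble Ω)} {g : Gamble Ω} (hg : g ∈ B) :
    g ∈ posi B := by
  refine ⟨1, one_pos, fun _ => 1, fun _ => g, fun _ => one_pos, fun _ => hg, by simp⟩

lemma posi_smul {Ω : Type v} {B : Set (Gamble Ω)} {f : Gamble Ω} (hf : f ∈ posi B)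
    {l : ℝ} (hl : 0 < l) : l • f ∈ posi B := by
  obtain ⟨n, hn, lam, g, hlam, hgB, rfl⟩ := hf
  exact ⟨n, hn, fun i => l * lam i, g, fun i => mul_pos hl (hlam i), hgB, by
    simp [Finset.smul_sum, smul_smul]⟩

lemma posi_add {Ω : Type v} {B : Set (Gamble Ω)} {f f' : Gamble Ω}
    (hf : f ∈ posi B) (hf' : f' ∈ posi B) : f + f' ∈ posi B := by
  obtain ⟨n, hn, lam, g, hlam, hgB, rfl⟩ := hf
  obtain ⟨m, hm, lam', g', hlam', hgB', rfl⟩ := hf'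
  refine ⟨n + m, by omega, Fin.append lam lam', Fin.append g g', ?_, ?_, ?_⟩
  · intro i
    rcases Nat.lt_or_ge i.val n with h | h
    · have : i = Fin.castAdd m ⟨i, h⟩ := by simp [Fin.ext_iff]
      rw [this, Fin.append_left]; exact hlam _
    · have : i = Fin.natAdd n ⟨i - n, by omega⟩ := by simp [Fin.ext_iff]; omega
      rw [this, Fin.append_right]; exact hlam' _
  · intro i
    rcases Nat.lt_or_ge i.val n with h | h
    · have : i = Fin.castAdd m ⟨i, h⟩ := by simp [Fin.ext_iff]
      rw [this, Fin.append_left]; exact hgB _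
    · have : i = Fin.natAdd n ⟨i - n, by omega⟩ := by simp [Fin.ext_iff]; omega
      rw [this, Fin.append_right]; exact hgB' _
  · rw [Fin.sum_univ_add]
    simp [Fin.append_left, Fin.append_right]

theorem stmt3 {Ω : Type v} [Nonempty Ω] (D : Set (Gamble Ω)) :
    CoherentD D ↔ ((0 : Gamble Ω) ∉ D ∧ ∃ E : Set (Gamble Ω), D = desext E) := by
  constructor
  · rintro ⟨h0, hpos, hsmul, hadd⟩
    refine ⟨h0, D, ?_⟩
    apply Set.Subset.antisymm
    · intro f hf
      exact mem_posi_self (Set.mem_union_left _ hf)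
    · rintro f ⟨n, hn, lam, g, hlam, hgD, rfl⟩
      have hD : ∀ i, g i ∈ D := fun i => (hgD i).elim id (fun h => hpos h)
      have : ∀ i, lam i • g i ∈ D := fun i => hsmul _ (hD i) _ (hlam i)
      have key : ∀ m : ℕ, 0 < m → ∀ hmn : m ≤ n,
          ∑ i : Fin m, lam (Fin.castLE hmn i) • g (Fin.castLE hmn i) ∈ D := by
        intro m hm
        induction m with
        | zero => omega
        | succ k ih =>
          intro hmn
          rcases Nat.eq_zero_or_pos k with hk | hk
          · subst hk; simpa using this _
          · rw [Fin.sum_univ_castSucc]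
            exact hadd _ (ih hk (le_of_lt hmn)) _ (this _)
      have := key n hn le_rfl
      simpa using this
  · rintro ⟨h0, E, rfl⟩
    refine ⟨h0, ?_, ?_, ?_⟩
    · intro g hg; exact mem_posi_self (Set.mem_union_right _ hg)
    · intro g hg l hl; exact posi_smul hg hl
    · intro f hf g hg; exact posi_add hf hg
end

section
/- Suppose 𝒦 ⊆ 𝒫(𝒢) is coherent and A₁,…,Aₙ ∈ 𝒦. If B ⊆ 𝒢 is such that for every sequence (g₁,…,gₙ) ∈ A₁ × … × Aₙ, either 0 ∈ desext({g₁,…,gₙ}) or there exists f ∈ B with f ∈ desext({g₁,…,gₙ}), then B ∈ 𝒦. -/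
open scoped BigOperators

universe u v

lemma coe_apply_sum {Ω : Type v} {ι : Type*} (s : Finset ι) (l : ι → ℝ)
    (g : ι → Gamble Ω) (ω : Ω) :
    ((↑(∑ i ∈ s, l i • g i) : Ω → ℝ)) ω = ∑ i ∈ s, l i * (↑(g i) : Ω → ℝ) ω := by
  rw [AddSubmonoidClass.coe_finset_sum, Finset.sum_apply]
  simp [smul_eq_mul]

lemma sum_mem_posi {Ω : Type v} {B : Set (Gamble Ω)} {ι : Type*} (s : Finset ι)
    (hs : s.Nonempty) (l : ι → ℝ) (g : ι → Gamble Ω)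
    (hl : ∀ i ∈ s, 0 < l i) (hg : ∀ i ∈ s, g i ∈ B) :
    (∑ i ∈ s, l i • g i) ∈ posi B := by
  refine ⟨s.card, Finset.card_pos.mpr hs, fun j => l (s.equivFin.symm j),
    fun j => g (s.equivFin.symm j), fun j => hl _ (s.equivFin.symm j).2,
    fun j => hg _ (s.equivFin.symm j).2, ?_⟩
  rw [← Finset.sum_coe_sort s (fun i => l i • g i)]
  exact Fintype.sum_equiv s.equivFin _ _ (fun x => by simp)

lemma posi_Gpos_subset {Ω : Type v} : posi (Gpos Ω) ⊆ Gpos Ω := by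
  rintro x ⟨n, hn, l, g, hl, hg, rfl⟩
  constructor
  · intro ω
    rw [coe_apply_sum]
    simp only [ZeroMemClass.coe_zero, Pi.zero_apply]
    exact Finset.sum_nonneg fun i _ =>
      mul_nonneg (hl i).le (by simpa using (hg i).1 ω)
  · intro h0
    set i0 : Fin n := ⟨0, hn⟩
    obtain ⟨ω, hω⟩ : ∃ ω, (↑(g i0) : Ω → ℝ) ω ≠ 0 := by
      by_contra hc
      push_neg at hc
      exact (hg i0).2 (Subtype.ext (funext fun ω => hc ω))
    have hpos : (0:ℝ) < ∑ i : Fin n, l i * (↑(g i) : Ω → ℝ) ω := by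
      refine Finset.sum_pos' (fun i _ => mul_nonneg (hl i).le (by simpa using (hg i).1 ω)) ?_
      exact ⟨i0, Finset.mem_univ _, mul_pos (hl i0) (lt_of_le_of_ne (by simpa using (hg i0).1 ω) (Ne.symm hω))⟩
    have h0' : ((↑(∑ i : Fin n, l i • g i) : Ω → ℝ)) ω = 0 := by
      rw [h0]; simp
    rw [coe_apply_sum] at h0'
    exact hpos.ne' h0'

lemma desext_decomp {Ω : Type v} {E : Set (Gamble Ω)} {x : Gamble Ω} (hx : x ∈ desext E) :
    x ∈ Gpos Ω ∨ ∃ c ∈ posi E, gle c x := by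
  classical
  obtain ⟨n, hn, l, g, hl, hg, rfl⟩ := hx
  set S : Finset (Fin n) := Finset.univ.filter (fun i => g i ∈ E) with hSdef
  by_cases hS : S.Nonempty
  · right
    refine ⟨∑ i ∈ S, l i • g i, sum_mem_posi S hS l g (fun i _ => hl i)
      (fun i hi => by simpa [hSdef] using (Finset.mem_filter.mp hi).2), ?_⟩
    intro ω
    rw [coe_apply_sum, coe_apply_sum]
    rw [← Finset.sum_filter_add_sum_filter_not Finset.univ (fun i => g i ∈ E)
      (fun i => l i * (↑(g i) : Ω → ℝ) ω)]
    refine le_add_of_nonneg_right (Finset.sum_nonneg fun i hi => ?_)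
    have hi' : g i ∈ Gpos Ω := (hg i).resolve_left (Finset.mem_filter.mp hi).2
    exact mul_nonneg (hl i).le (by simpa using hi'.1 ω)
  · left
    refine posi_Gpos_subset ⟨n, hn, l, g, hl, fun i => ?_, rfl⟩
    refine (hg i).resolve_left fun hiE => hS ⟨i, ?_⟩
    simp [hSdef, hiE]

theorem stmt6 {Ω : Type v} [Nonempty Ω] (K : Set (Set (Gamble Ω))) (hK : CoherentK K)
    {n : ℕ} (hn : 0 < n) (A : Fin n → Set (Gamble Ω)) (hA : ∀ i, A i ∈ K)
    (B : Set (Gamble Ω))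
    (hB : ∀ g : Fin n → Gamble Ω, (∀ i, g i ∈ A i) →
      (0 : Gamble Ω) ∈ desext (Set.range g) ∨ ∃ f ∈ B, f ∈ desext (Set.range g)) :
    B ∈ K := by
  classical
  obtain ⟨hKe, hK0, hKpos, hKsup, hKdom, hKadd⟩ := hK
  by_cases hNB : ∃ f, f ∈ B ∧ f ∈ Gpos Ω
  · obtain ⟨f, hfB, hfp⟩ := hNB
    exact hKsup _ (hKpos f hfp) B (Set.singleton_subset_iff.mpr hfB)
  · push_neg at hNB
    have hP : ∀ g : Fin n → Gamble Ω, (∀ i, g i ∈ A i) →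
        ∃ c, c ∈ posi (Set.range g) ∧ (gle c 0 ∨ ∃ f ∈ B, gle c f) := by
      intro g hg
      rcases hB g hg with h0 | ⟨f, hfB, hfd⟩
      · rcases desext_decomp h0 with hGp | ⟨c, hc, hcle⟩
        · exact absurd rfl hGp.2
        · exact ⟨c, hc, Or.inl hcle⟩
      · rcases desext_decomp hfd with hGp | ⟨c, hc, hcle⟩
        · exact absurd hGp (hNB f hfB)
        · exact ⟨c, hc, Or.inr ⟨f, hfB, hcle⟩⟩
    let F : (Fin n → Gamble Ω) → Gamble Ω :=
      fun g => if h : ∀ i, g i ∈ A i then (hP g h).choose else 0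
    have hF : ∀ g : Fin n → Gamble Ω, (∀ i, g i ∈ A i) →
        F g ∈ posi (Set.range g) ∧ (gle (F g) 0 ∨ ∃ f ∈ B, gle (F g) f) := by
      intro g h
      simp only [F, dif_pos h]
      exact (hP g h).choose_spec
    have hD : {b | ∃ g : Fin n → Gamble Ω, (∀ i, g i ∈ A i) ∧ b = F g} ∈ K :=
      hKadd n hn A hA F (fun g h => (hF g h).1)
    set D := {b | ∃ g : Fin n → Gamble Ω, (∀ i, g i ∈ A i) ∧ b = F g}
    let Φ : Gamble Ω → Gamble Ω :=
      fun b => if h : ∃ f, f ∈ B ∧ gle b f then h.choose else 0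
    have hΦdom : ∀ b ∈ D, gle b (Φ b) := by
      rintro b ⟨g, hg, rfl⟩
      by_cases h : ∃ f, f ∈ B ∧ gle (F g) f
      · simp only [Φ, dif_pos h]
        exact h.choose_spec.2
      · simp only [Φ, dif_neg h]
        rcases (hF g hg).2 with h1 | ⟨f, hfB, hfle⟩
        · exact h1
        · exact absurd ⟨f, hfB, hfle⟩ h
    have hΦD : Φ '' D ∈ K := hKdom D hD Φ hΦdom
    have hsub : (Φ '' D) \ {0} ⊆ B := by
      rintro y ⟨⟨b, _, rfl⟩, hy0⟩
      by_cases h : ∃ f, f ∈ B ∧ gle b f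
      · simpa only [Φ, dif_pos h] using h.choose_spec.1
      · exact absurd (show Φ b ∈ ({0} : Set (Gamble Ω)) by
          simp only [Φ, dif_neg h, Set.mem_singleton_iff]) hy0
    exact hKsup _ (hK0 _ hΦD) B hsub
end

section
/- Assume all gamble sets are finite subsets of 𝒢. If 𝒦 ⊆ 𝒫_fin(𝒢) satisfies the superset axiom (A ∈ 𝒦 and finite B ⊇ A imply B ∈ 𝒦) and the pairwise addition axiom KAddPair, then 𝒦 satisfies the general finite addition axiom KAdd: for A₁,…,Aₙ ∈ 𝒦 and any choice f_{(g₁,…,gₙ)} ∈ posi({g₁,…,gₙ}) for each (g₁,…,gₙ) ∈ A₁×…×Aₙ, the set {f_{(g₁,…,gₙ)} : (gᵢ) ∈ A₁×…×Aₙ} is in 𝒦. -/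
open scoped BigOperators

universe u v

section AuxPosi

variable {Ω : Type v}

lemma posi_mono {B C : Set (Gamble Ω)} (h : B ⊆ C) : posi B ⊆ posi C := by
  rintro f ⟨n, hn, l, g, hl, hg, rfl⟩
  exact ⟨n, hn, l, g, hl, fun i => h (hg i), rfl⟩

lemma mem_posi_finset {B : Set (Gamble Ω)} {ι : Type u} [Fintype ι]
    (s : Finset ι) (hs : s.Nonempty) (l : ι → ℝ) (g : ι → Gamble Ω)
    (hl : ∀ i ∈ s, 0 < l i) (hg : ∀ i ∈ s, g i ∈ B) :
    (∑ i ∈ s, l i • g i) ∈ posi B := by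
  have hn : 0 < s.card := Finset.card_pos.mpr hs
  refine ⟨s.card, hn, fun j => l (s.equivFin.symm j), fun j => g (s.equivFin.symm j),
    fun j => hl _ (s.equivFin.symm j).2, fun j => hg _ (s.equivFin.symm j).2, ?_⟩
  rw [← Finset.sum_attach s (fun i => l i • g i)]
  exact Fintype.sum_equiv s.equivFin _ _ (fun x => by simp)

lemma smul_mem_posi {B : Set (Gamble Ω)} {c : ℝ} (hc : 0 < c) {b : Gamble Ω} (hb : b ∈ B) :
    c • b ∈ posi B :=
  ⟨1, one_pos, fun _ => c, fun _ => b, fun _ => hc, fun _ => hb, by simp⟩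

lemma self_mem_posi {B : Set (Gamble Ω)} {b : Gamble Ω} (hb : b ∈ B) : b ∈ posi B := by
  have := smul_mem_posi (B := B) one_pos hb
  simpa using this

lemma add_mem_posi {B : Set (Gamble Ω)} {f g : Gamble Ω}
    (hf : f ∈ posi B) (hg : g ∈ posi B) : f + g ∈ posi B := by
  obtain ⟨n, hn, l, u, hl, hu, rfl⟩ := hf
  obtain ⟨k, hk, l', u', hl', hu', rfl⟩ := hg
  refine ⟨n + k, by omega, Fin.append l l', Fin.append u u', ?_, ?_, ?_⟩
  · intro i
    refine Fin.addCases (fun j => ?_) (fun j => ?_) i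
    · simpa [Fin.append_left] using hl j
    · simpa [Fin.append_right] using hl' j
  · intro i
    refine Fin.addCases (fun j => ?_) (fun j => ?_) i
    · simpa [Fin.append_left] using hu j
    · simpa [Fin.append_right] using hu' j
  · rw [Fin.sum_univ_add]
    simp [Fin.append_left, Fin.append_right]

lemma posi_insert_decomp {a : Gamble Ω} {B : Set (Gamble Ω)} {f : Gamble Ω}
    (hf : f ∈ posi (insert a B)) :
    (∃ t ∈ posi B, ∃ c : ℝ, 0 ≤ c ∧ f = c • a + t) ∨ (∃ c : ℝ, 0 < c ∧ f = c • a) := by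
  classical
  obtain ⟨n, hn, l, g, hl, hg, rfl⟩ := hf
  set s : Finset (Fin n) := Finset.univ.filter (fun i => g i ∈ B) with hs
  have hga : ∀ i ∈ sᶜ, g i = a := by
    intro i hi
    have hmem := hg i
    rcases Set.mem_insert_iff.mp hmem with h | h
    · exact h
    · exfalso
      have : i ∈ s := by simp [hs, h]
      exact (Finset.mem_compl.mp hi) this
  have hsum : (∑ i, l i • g i) = (∑ i ∈ s, l i • g i) + ∑ i ∈ sᶜ, l i • g i :=
    (Finset.sum_add_sum_compl s _).symm
  have hca : (∑ i ∈ sᶜ, l i • g i) = (∑ i ∈ sᶜ, l i) • a := by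
    rw [Finset.sum_smul]
    exact Finset.sum_congr rfl fun i hi => by rw [hga i hi]
  rcases s.eq_empty_or_nonempty with h | h
  · right
    have hne : Nonempty (Fin n) := ⟨⟨0, hn⟩⟩
    refine ⟨∑ i ∈ sᶜ, l i, ?_, ?_⟩
    · refine Finset.sum_pos (fun i _ => hl i) ?_
      rw [h, Finset.compl_empty]
      exact Finset.univ_nonempty
    · rw [hsum, hca, h]
      simp
  · left
    refine ⟨∑ i ∈ s, l i • g i, ?_, ∑ i ∈ sᶜ, l i, ?_, ?_⟩
    · refine mem_posi_finset s h l g (fun i _ => hl i) (fun i hi => ?_)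
      simpa [hs] using hi
    · exact Finset.sum_nonneg fun i _ => (hl i).le
    · rw [hsum, hca, add_comm]

end AuxPosi

theorem stmt10 {Ω : Type v} [Nonempty Ω] (K : Set (Set (Gamble Ω)))
    (hfin : ∀ A ∈ K, A.Finite)
    (hsup : ∀ A ∈ K, ∀ B : Set (Gamble Ω), B.Finite → A ⊆ B → B ∈ K)
    (hpair : ∀ A₁ ∈ K, ∀ A₂ ∈ K, ∀ F : Gamble Ω × Gamble Ω → Gamble Ω,
      (∀ g₁ ∈ A₁, ∀ g₂ ∈ A₂, F (g₁, g₂) ∈ posi {g₁, g₂}) →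
      {b | ∃ g₁ ∈ A₁, ∃ g₂ ∈ A₂, b = F (g₁, g₂)} ∈ K) :
    ∀ n : ℕ, 0 < n → ∀ A : Fin n → Set (Gamble Ω), (∀ i, A i ∈ K) →
      ∀ F : (Fin n → Gamble Ω) → Gamble Ω,
      (∀ g : Fin n → Gamble Ω, (∀ i, g i ∈ A i) → F g ∈ posi (Set.range g)) →
      {b | ∃ g : Fin n → Gamble Ω, (∀ i, g i ∈ A i) ∧ b = F g} ∈ K  := by
  classical
  suffices H : ∀ m : ℕ, ∀ A : Fin (m+1) → Set (Gamble Ω), (∀ i, A i ∈ K) →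
      ∀ F : (Fin (m+1) → Gamble Ω) → Gamble Ω,
      (∀ g : Fin (m+1) → Gamble Ω, (∀ i, g i ∈ A i) → F g ∈ posi (Set.range g)) →
      {b | ∃ g : Fin (m+1) → Gamble Ω, (∀ i, g i ∈ A i) ∧ b = F g} ∈ K by
    intro n hn A hA F hF
    obtain ⟨m, rfl⟩ := Nat.exists_eq_succ_of_ne_zero hn.ne'
    exact H m A hA F hF
  intro m
  induction m with
  | zero =>
    intro A hA F hF
    have h1 : ∀ i : Fin (0+1), i = 0 := fun i => Fin.ext (Nat.lt_one_iff.mp i.isLt)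
    have h0 : ∀ i : Fin 1, A i = A 0 := fun i => by rw [h1 i]
    have hcond : ∀ g₁ ∈ A 0, ∀ g₂ ∈ A 0,
        (fun p : Gamble Ω × Gamble Ω => F (fun _ => p.1)) (g₁, g₂) ∈ posi {g₁, g₂} := by
      intro g₁ h₁ g₂ h₂
      have hmem := hF (fun _ => g₁) (fun i => by rw [h0 i]; exact h₁)
      rw [Set.range_const] at hmem
      refine posi_mono ?_ hmem
      intro x hx
      simp only [Set.mem_singleton_iff] at hx
      simp [hx]
    have himg := hpair (A 0) (hA 0) (A 0) (hA 0) (fun p => F fun _ => p.1) hcond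
    convert himg using 1
    ext b
    constructor
    · rintro ⟨g, hg, rfl⟩
      refine ⟨g 0, hg 0, g 0, hg 0, ?_⟩
      congr 1
      funext i
      show g i = g 0
      rw [h1 i]
    · rintro ⟨g₁, h₁, g₂, h₂, rfl⟩
      exact ⟨fun _ => g₁, fun i => by rw [h0 i]; exact h₁, rfl⟩
  | succ m ih =>
    intro A hA F hF
    have hA' : ∀ i : Fin (m+1), A i.succ ∈ K := fun i => hA i.succ
    set T : Set (Gamble Ω) :=
      {b | ∃ g : Fin (m+2) → Gamble Ω, (∀ i, g i ∈ A i) ∧ b = F g} with hTdef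
    have hTfin : T.Finite := by
      have hsub : T ⊆ F '' (Set.pi Set.univ A) := by
        rintro b ⟨g, hg, rfl⟩
        exact ⟨g, by simpa [Set.mem_pi] using hg, rfl⟩
      exact Set.Finite.subset (Set.Finite.image F (Set.Finite.pi fun i => hfin _ (hA i))) hsub
    have hstep : ∀ a ∈ A 0, ∀ U ∈ K, ∃ U' ∈ K, U' ⊆ (U \ {a}) ∪ T := by
      intro a ha U hU
      have hconsmem : ∀ g' : Fin (m+1) → Gamble Ω, (∀ i : Fin (m+1), g' i ∈ A i.succ) →
          ∀ i : Fin (m+2), (Fin.cons a g' : Fin (m+2) → Gamble Ω) i ∈ A i := by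
        intro g' hg' i
        refine Fin.cases ?_ ?_ i
        · simpa using ha
        · intro j; simpa using hg' j
      have hex : ∀ g' : Fin (m+1) → Gamble Ω, ∃ v : Gamble Ω,
          (∀ i : Fin (m+1), g' i ∈ A i.succ) →
            v ∈ posi (Set.range g') ∧ F (Fin.cons a g') ∈ posi {a, v} := by
        intro g'
        by_cases hg' : ∀ i : Fin (m+1), g' i ∈ A i.succ
        · have hmem := hF (Fin.cons a g') (hconsmem g' hg')
          rw [Fin.range_cons] at hmem
          rcases posi_insert_decomp hmem with ⟨t, ht, c, hc, heq⟩ | ⟨c, hc, heq⟩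
          · refine ⟨t, fun _ => ⟨ht, ?_⟩⟩
            rcases eq_or_lt_of_le hc with hc0 | hc0
            · rw [heq, ← hc0, zero_smul, zero_add]
              exact self_mem_posi (by simp)
            · rw [heq]
              exact add_mem_posi (smul_mem_posi hc0 (by simp)) (self_mem_posi (by simp))
          · refine ⟨∑ i, g' i, fun _ => ⟨?_, ?_⟩⟩
            · have hmem2 := mem_posi_finset (B := Set.range g') Finset.univ
                Finset.univ_nonempty (fun _ => (1:ℝ)) g' (fun _ _ => one_pos)
                (fun i _ => Set.mem_range_self i)
              simpa using hmem2
            · rw [heq]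
              exact smul_mem_posi hc (by simp)
        · exact ⟨0, fun h => absurd h hg'⟩
      choose F' hF'spec using hex
      have hVa : {b | ∃ g' : Fin (m+1) → Gamble Ω, (∀ i : Fin (m+1), g' i ∈ A i.succ) ∧ b = F' g'} ∈ K :=
        ih (fun i => A i.succ) hA' F' (fun g' hg' => (hF'spec g' hg').1)
      have hHcond : ∀ u ∈ U,
          ∀ v ∈ {b | ∃ g' : Fin (m+1) → Gamble Ω, (∀ i : Fin (m+1), g' i ∈ A i.succ) ∧ b = F' g'},
          (fun p : Gamble Ω × Gamble Ω =>
            if hp : ∃ g' : Fin (m+1) → Gamble Ω, (∀ i : Fin (m+1), g' i ∈ A i.succ) ∧ p.2 = F' g' then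
              (if p.1 = a then F (Fin.cons a hp.choose) else p.1)
            else p.1) (u, v) ∈ posi {u, v} := by
        intro u hu v hv
        have hvex : ∃ g' : Fin (m+1) → Gamble Ω, (∀ i : Fin (m+1), g' i ∈ A i.succ) ∧ v = F' g' := hv
        simp only [dif_pos hvex]
        by_cases hua : u = a
        · rw [if_pos hua]
          have hspec := hvex.choose_spec
          have hk := (hF'spec hvex.choose hspec.1).2
          have hset : ({u, v} : Set (Gamble Ω)) = {a, F' hvex.choose} := by
            rw [hua, ← hspec.2]
          rw [hset]
          exact hk
        · rw [if_neg hua]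
          exact self_mem_posi (by simp)
      have himg := hpair U hU _ hVa
        (fun p : Gamble Ω × Gamble Ω =>
          if hp : ∃ g' : Fin (m+1) → Gamble Ω, (∀ i : Fin (m+1), g' i ∈ A i.succ) ∧ p.2 = F' g' then
            (if p.1 = a then F (Fin.cons a hp.choose) else p.1)
          else p.1) hHcond
      refine ⟨_, himg, ?_⟩
      rintro b ⟨u, hu, v, hv, rfl⟩
      have hvex : ∃ g' : Fin (m+1) → Gamble Ω, (∀ i : Fin (m+1), g' i ∈ A i.succ) ∧ v = F' g' := hv
      simp only [dif_pos hvex]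
      by_cases hua : u = a
      · rw [if_pos hua]
        right
        exact ⟨Fin.cons a hvex.choose, hconsmem _ hvex.choose_spec.1, rfl⟩
      · rw [if_neg hua]
        exact Or.inl ⟨hu, by simpa using hua⟩
    have hlist : ∀ l : List (Gamble Ω), (∀ x ∈ l, x ∈ A 0) →
        ∀ U ∈ K, U ⊆ T ∪ {x | x ∈ l} → T ∈ K := by
      intro l
      induction l with
      | nil =>
        intro _ U hU hsub
        refine hsup U hU T hTfin ?_
        intro x hx
        rcases hsub hx with h | h
        · exact h
        · simp at h
      | cons a tl ihl =>
        intro hmem U hU hsub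
        obtain ⟨U', hU', hsub'⟩ := hstep a (hmem a (List.mem_cons_self)) U hU
        refine ihl (fun x hx => hmem x (List.mem_cons_of_mem a hx)) U' hU' ?_
        intro b hb
        rcases hsub' hb with ⟨hbU, hba⟩ | h
        · rcases hsub hbU with h' | h'
          · exact Or.inl h'
          · right
            simp only [Set.mem_setOf_eq, List.mem_cons] at h' ⊢
            rcases h' with h' | h'
            · exact absurd h' (by simpa using hba)
            · exact h'
        · exact Or.inl h
    have hfinA0 := hfin (A 0) (hA 0)
    refine hlist hfinA0.toFinset.toList ?_ (A 0) (hA 0) ?_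
    · intro x hx
      have : x ∈ hfinA0.toFinset := by simpa [Finset.mem_toList] using hx
      exact (Set.Finite.mem_toFinset _).mp this
    · intro x hx
      right
      simp only [Set.mem_setOf_eq, Finset.mem_toList]
      exact (Set.Finite.mem_toFinset _).mpr hx
end
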